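/- arXiv:2009.08777 — 3 statements merged into one kernel-verified Lean document; each statement's English description precedes it below -/
import Mathlib

section
/- Let d = 2 and let Ω be an open subset of ℝ² (i.e., EuclideanSpace ℝ (Fin 2)) containing the origin. Define û(x) = -(1/(2π)) · log‖x‖ for x ≠ 0. Then the function x ↦ ‖∇û(x)‖² (equivalently x ↦ ‖fderiv ℝ û x‖²) is not Lebesgue-integrable on Ω; consequently û does not belong to H¹(Ω). -/
open MeasureTheory Real

section aux

open Metric
open scoped ENNReal NNReal

local notation "E2" => EuclideanSpace ℝ (Fin 2)

private lemma aux_hasFDerivAt (x : E2) (hx : x ≠ 0) :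
    HasFDerivAt (fun y : E2 => -(1 / (2 * π)) * Real.log ‖y‖)
      ((-(1 / (2 * π)) * (1 / 2)) • ((‖x‖ ^ 2)⁻¹ • (2 • innerSL ℝ x))) x := by
  have h1 : (fun y : E2 => -(1 / (2 * π)) * Real.log ‖y‖)
      = fun y => (-(1 / (2 * π)) * (1 / 2)) * Real.log (‖y‖ ^ 2) := by
    funext y
    rw [Real.log_pow]
    push_cast
    ring
  rw [h1]
  have h2 : HasFDerivAt (fun y : E2 => ‖y‖ ^ 2) (2 • innerSL ℝ x) x :=
    (hasStrictFDerivAt_norm_sq x).hasFDerivAt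
  have hx2 : (‖x‖ : ℝ) ^ 2 ≠ 0 := by
    have := norm_pos_iff.2 hx
    positivity
  have h3 : HasDerivAt Real.log (‖x‖ ^ 2)⁻¹ (‖x‖ ^ 2) := Real.hasDerivAt_log hx2
  exact (h3.comp_hasFDerivAt x h2).const_mul _

private lemma aux_norm_sq (x : E2) (hx : x ≠ 0) :
    ‖fderiv ℝ (fun y : E2 => -(1 / (2 * π)) * Real.log ‖y‖) x‖ ^ 2
      = (1 / (2 * π)) ^ 2 * (‖x‖ ^ 2)⁻¹ := by
  rw [(aux_hasFDerivAt x hx).fderiv]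
  have hxn : (0:ℝ) < ‖x‖ := norm_pos_iff.2 hx
  have hπ : (0:ℝ) < π := Real.pi_pos
  rw [norm_smul, norm_smul, ← Nat.cast_smul_eq_nsmul ℝ, norm_smul]
  simp only [Real.norm_eq_abs, innerSL_apply_norm, Nat.cast_ofNat]
  rw [abs_mul, abs_neg, abs_div, abs_mul, abs_of_pos hπ, abs_div, abs_inv, abs_pow, abs_norm]
  norm_num
  field_simp

private lemma vol_ball_E2 (r : ℝ) (hr : 0 ≤ r) :
    volume (ball (0 : E2) r) = ENNReal.ofReal (r ^ 2 * π) := by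
  rw [EuclideanSpace.volume_ball]
  simp only [Fintype.card_fin]
  rw [show ((2:ℕ) : ℝ) / 2 + 1 = 2 by norm_num, Real.Gamma_two]
  rw [← ENNReal.ofReal_pow hr, ← ENNReal.ofReal_mul (by positivity)]
  congr 1
  rw [Real.sq_sqrt Real.pi_pos.le]
  ring

private lemma not_integrable_invsq {ε : ℝ} (hε : 0 < ε) :
    ¬ IntegrableOn (fun x : E2 => (‖x‖ ^ 2)⁻¹) (ball 0 ε) volume := by
  intro h
  have hnn : (fun _ : E2 => (0:ℝ)) ≤ᵐ[volume.restrict (ball (0:E2) ε)]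
      fun x : E2 => (‖x‖ ^ 2)⁻¹ := by
    filter_upwards with x using by positivity
  have hfin := (hasFiniteIntegral_iff_ofReal hnn).1 h.2
  set A : ℕ → Set E2 := fun k => ball (0:E2) (ε / 2 ^ k) \ ball 0 (ε / 2 ^ (k+1)) with hA
  have hmeas : ∀ k, MeasurableSet (A k) := fun k =>
    measurableSet_ball.diff measurableSet_ball
  have hsub : ∀ k, A k ⊆ ball (0:E2) ε := by
    intro k x hx
    have h1 : ‖x‖ < ε / 2 ^ k := by simpa [dist_zero_right] using hx.1
    have : ε / 2 ^ k ≤ ε := by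
      apply div_le_self hε.le
      exact one_le_pow₀ one_le_two
    simpa [mem_ball, dist_zero_right] using h1.trans_le this
  have hdisj : Pairwise (Function.onFun Disjoint A) := by
    have key : ∀ j k, j < k → Disjoint (A j) (A k) := by
      intro j k hjk
      rw [Set.disjoint_left]
      intro x hxj hxk
      have h1 : ¬ ‖x‖ < ε / 2 ^ (j+1) := by simpa [dist_zero_right] using hxj.2
      have h2 : ‖x‖ < ε / 2 ^ k := by simpa [dist_zero_right] using hxk.1
      have h3 : ε / 2 ^ k ≤ ε / 2 ^ (j+1) := by
        apply div_le_div_of_nonneg_left hε.le (by positivity)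
        exact pow_le_pow_right₀ one_le_two hjk
      exact h1 (h2.trans_le h3)
    intro j k hjk
    rcases lt_or_gt_of_ne hjk with h | h
    · exact key j k h
    · exact (key k j h).symm
  have hvolA : ∀ k, volume (A k) = ENNReal.ofReal ((3/4) * ((ε / 2 ^ k) ^ 2 * π)) := by
    intro k
    have hsub2 : ball (0:E2) (ε / 2 ^ (k+1)) ⊆ ball 0 (ε / 2 ^ k) := by
      apply ball_subset_ball
      apply div_le_div_of_nonneg_left hε.le (by positivity)
      exact pow_le_pow_right₀ one_le_two (Nat.le_succ k)
    rw [hA]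
    rw [measure_diff hsub2 measurableSet_ball.nullMeasurableSet measure_ball_lt_top.ne]
    rw [vol_ball_E2 _ (by positivity), vol_ball_E2 _ (by positivity),
      ← ENNReal.ofReal_sub _ (by positivity)]
    congr 1
    rw [pow_succ]
    field_simp
    ring
  have hterm : ∀ k, ENNReal.ofReal ((3/4) * π) ≤
      ∫⁻ x in A k, ENNReal.ofReal ((‖x‖ ^ 2)⁻¹) ∂volume := by
    intro k
    have hrk : (0:ℝ) < ε / 2 ^ k := by positivity
    calc ENNReal.ofReal ((3/4) * π)
        = ENNReal.ofReal (((ε / 2 ^ k) ^ 2)⁻¹) * volume (A k) := by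
          rw [hvolA k, ← ENNReal.ofReal_mul (by positivity)]
          congr 1
          field_simp
      _ = ∫⁻ _ in A k, ENNReal.ofReal (((ε / 2 ^ k) ^ 2)⁻¹) ∂volume := by
          rw [setLIntegral_const]
      _ ≤ _ := by
          apply setLIntegral_mono' (hmeas k)
          intro x hx
          apply ENNReal.ofReal_le_ofReal
          have h1 : ‖x‖ < ε / 2 ^ k := by simpa [dist_zero_right] using hx.1
          have h2 : ¬ ‖x‖ < ε / 2 ^ (k+1) := by simpa [dist_zero_right] using hx.2
          have hxpos : (0:ℝ) < ‖x‖ := lt_of_lt_of_le (by positivity) (not_lt.1 h2)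
          apply inv_anti₀ (by positivity)
          exact pow_le_pow_left₀ hxpos.le h1.le 2
  have hsum : (∫⁻ x in ball (0:E2) ε, ENNReal.ofReal ((‖x‖ ^ 2)⁻¹) ∂volume) = ⊤ := by
    refine top_unique ?_
    calc (⊤ : ℝ≥0∞) = ∑' _ : ℕ, ENNReal.ofReal ((3/4) * π) := by
          rw [ENNReal.tsum_const_eq_top_of_ne_zero]
          simp only [ne_eq, ENNReal.ofReal_eq_zero, not_le]
          positivity
      _ ≤ ∑' k, ∫⁻ x in A k, ENNReal.ofReal ((‖x‖ ^ 2)⁻¹) ∂volume :=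
          ENNReal.tsum_le_tsum hterm
      _ = ∫⁻ x in ⋃ k, A k, ENNReal.ofReal ((‖x‖ ^ 2)⁻¹) ∂volume :=
          (lintegral_iUnion hmeas hdisj _).symm
      _ ≤ _ := lintegral_mono_set (Set.iUnion_subset hsub)
  rw [hsum] at hfin
  exact (lt_irrefl _ hfin)

end aux

/-- The 2D Green's function `û(x) = -(1/(2π)) log ‖x‖` of the Laplacian has a gradient whose
squared norm is not Lebesgue-integrable on any open set `Ω` containing the origin; consequently
`û ∉ H¹(Ω)`. -/
theorem green_function_2d_not_in_H1
    (Ω : Set (EuclideanSpace ℝ (Fin 2))) (hΩ : IsOpen Ω)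
    (h0 : (0 : EuclideanSpace ℝ (Fin 2)) ∈ Ω) :
    ¬ IntegrableOn
      (fun x : EuclideanSpace ℝ (Fin 2) =>
        ‖fderiv ℝ (fun y : EuclideanSpace ℝ (Fin 2) => -(1 / (2 * π)) * Real.log ‖y‖) x‖ ^ 2)
      Ω volume := by
  intro H
  obtain ⟨ε, hε, hball⟩ := Metric.isOpen_iff.1 hΩ 0 h0
  have H2 := H.mono_set hball
  have hae : ∀ᵐ x ∂(volume.restrict (Metric.ball (0 : EuclideanSpace ℝ (Fin 2)) ε)),
      x ≠ (0 : EuclideanSpace ℝ (Fin 2)) := by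
    have h1 : ∀ᵐ x ∂(volume : Measure (EuclideanSpace ℝ (Fin 2))), x ≠ 0 := by
      rw [ae_iff]
      simpa using measure_singleton (0 : EuclideanSpace ℝ (Fin 2))
    exact h1.filter_mono (ae_mono Measure.restrict_le_self)
  have heq : (fun x : EuclideanSpace ℝ (Fin 2) =>
        ‖fderiv ℝ (fun y : EuclideanSpace ℝ (Fin 2) => -(1 / (2 * π)) * Real.log ‖y‖) x‖ ^ 2)
      =ᵐ[volume.restrict (Metric.ball (0 : EuclideanSpace ℝ (Fin 2)) ε)]
      fun x => (1 / (2 * π)) ^ 2 * (‖x‖ ^ 2)⁻¹ := by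
    filter_upwards [hae] with x hx
    exact aux_norm_sq x hx
  have H3 : IntegrableOn
      (fun x : EuclideanSpace ℝ (Fin 2) => (1 / (2 * π)) ^ 2 * (‖x‖ ^ 2)⁻¹)
      (Metric.ball 0 ε) volume := H2.congr heq
  have H4 : IntegrableOn (fun x : EuclideanSpace ℝ (Fin 2) => (‖x‖ ^ 2)⁻¹)
      (Metric.ball 0 ε) volume := by
    have := H3.const_mul (((1 / (2 * π)) ^ 2)⁻¹)
    refine this.congr (Filter.Eventually.of_forall fun x => ?_)
    have hπ : (π : ℝ) ≠ 0 := Real.pi_ne_zero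
    field_simp
  exact not_integrable_invsq hε H4
end

section
/- Let d ≥ 3, let c ≠ 0 be a real constant, and let Ω be an open subset of ℝ^d (EuclideanSpace ℝ (Fin d)) containing the origin. Define û(x) = c · ‖x‖^(2-d) for x ≠ 0. Then the function x ↦ ‖∇û(x)‖² (equivalently x ↦ ‖fderiv ℝ û x‖²) is not Lebesgue-integrable on Ω; consequently û does not belong to H¹(Ω). -/
open MeasureTheory Real

theorem myHasFDerivAt' {E : Type*} [NormedAddCommGroup E] [InnerProductSpace ℝ E]
    (x : E) (hx : x ≠ 0) (p : ℝ) :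
    HasFDerivAt (fun y : E ↦ ‖y‖ ^ p) ((p * ‖x‖ ^ (p - 2)) • innerSL ℝ x) x := by
  apply HasStrictFDerivAt.hasFDerivAt
  convert (hasStrictFDerivAt_norm_sq x).rpow_const (p := p / 2) (by simp [hx]) using 0
  simp_rw [← Real.rpow_natCast_mul (norm_nonneg _), ← Nat.cast_smul_eq_nsmul ℝ, smul_smul]
  ring_nf

theorem norm_fderiv_eq' {E : Type*} [NormedAddCommGroup E] [InnerProductSpace ℝ E]
    (x : E) (hx : x ≠ 0) (p c : ℝ) :
    ‖fderiv ℝ (fun y : E ↦ c * ‖y‖ ^ p) x‖ = |c| * |p| * ‖x‖ ^ (p - 1) := by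
  have h : HasFDerivAt (fun y : E ↦ c * ‖y‖ ^ p)
      (c • ((p * ‖x‖ ^ (p - 2)) • innerSL ℝ x)) x := (myHasFDerivAt' x hx p).const_mul c
  have hn : ‖x‖ ≠ 0 := norm_ne_zero_iff.mpr hx
  rw [h.fderiv, norm_smul, norm_smul, innerSL_apply_norm, norm_mul, Real.norm_eq_abs,
    Real.norm_eq_abs, Real.norm_eq_abs, abs_rpow_of_nonneg (norm_nonneg _), abs_norm,
    mul_assoc, mul_assoc, ← Real.rpow_add_one hn]
  ring_nf

open Metric in
theorem not_int_aux' (d : ℕ) (hd : 3 ≤ d) {ε : ℝ} (hε : 0 < ε) :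
    ¬ IntegrableOn (fun x : EuclideanSpace ℝ (Fin d) => ‖x‖ ^ ((2 : ℝ) - 2 * d))
      (ball 0 ε) volume := by
  set E := EuclideanSpace ℝ (Fin d)
  have hdim : Module.finrank ℝ E = d := finrank_euclideanSpace_fin
  have : Nontrivial E := by
    have : 0 < Module.finrank ℝ E := by omega
    exact Module.nontrivial_of_finrank_pos this
  have hd3 : (3 : ℝ) ≤ (d : ℝ) := by exact_mod_cast hd
  set s : ℝ := (2 : ℝ) - 2 * d with hs
  intro h
  set T : ENNReal := ∫⁻ x in ball (0 : E) ε, ENNReal.ofReal (‖x‖ ^ s) with hT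
  have hTfin : T ≠ ⊤ := by
    have := h.2
    rw [hasFiniteIntegral_iff_norm] at this
    refine ne_of_lt (lt_of_le_of_lt (lintegral_mono fun x => ?_) this)
    exact ENNReal.ofReal_le_ofReal (Real.le_norm_self _)
  set V : ENNReal := volume (ball (0 : E) 1) with hV
  have hVfin : V ≠ ⊤ := measure_ball_lt_top.ne
  have hVpos : 0 < V := measure_ball_pos _ _ one_pos
  set κ : ℝ := 1 - (1 / 2 : ℝ) ^ d with hκ
  have hκpos : 0 < κ := by
    have : (1 / 2 : ℝ) ^ d < 1 := pow_lt_one₀ (by norm_num) (by norm_num) (by omega)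
    rw [hκ]; linarith
  set c₀ : ℝ := ε ^ ((2 : ℝ) - d) * κ with hc₀
  have hc₀pos : 0 < c₀ := mul_pos (Real.rpow_pos_of_pos hε _) hκpos
  have key : ∀ n : ℕ, ENNReal.ofReal (c₀ * 2 ^ n) * V ≤ T := by
    intro n
    set R : ℝ := ε / 2 ^ n with hR
    have hRpos : 0 < R := div_pos hε (by positivity)
    have hRε : R ≤ ε := div_le_self hε.le (one_le_pow₀ one_le_two)
    set r : ℝ := R / 2 with hr
    have hrpos : 0 < r := by positivity
    set S : Set E := ball 0 R \ ball 0 r with hSdef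
    have hμS : volume S = ENNReal.ofReal (R ^ d * κ) * V := by
      rw [hSdef, measure_diff (ball_subset_ball (by linarith)) measurableSet_ball.nullMeasurableSet
        measure_ball_lt_top.ne, Measure.addHaar_ball _ _ hRpos.le, Measure.addHaar_ball _ _ hrpos.le,
        hdim, ← ENNReal.sub_mul (fun _ _ => hVfin), ← ENNReal.ofReal_sub _ (by positivity)]
      congr 2
      rw [hr, div_pow, hκ]
      ring
    have hpt : ∀ x ∈ S, ENNReal.ofReal (R ^ s) ≤ ENNReal.ofReal (‖x‖ ^ s) := by
      intro x hx
      obtain ⟨hx1, hx2⟩ := hx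
      rw [mem_ball_zero_iff] at hx1
      rw [mem_ball_zero_iff] at hx2
      push_neg at hx2
      have hxpos : 0 < ‖x‖ := lt_of_lt_of_le hrpos hx2
      exact ENNReal.ofReal_le_ofReal
        (Real.rpow_le_rpow_of_nonpos hxpos hx1.le (by rw [hs]; linarith))
    have hmono : ENNReal.ofReal (R ^ s) * volume S ≤ T := by
      calc ENNReal.ofReal (R ^ s) * volume S
          = ∫⁻ _ in S, ENNReal.ofReal (R ^ s) := by rw [setLIntegral_const, mul_comm]
        _ ≤ ∫⁻ x in S, ENNReal.ofReal (‖x‖ ^ s) :=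
            setLIntegral_mono' (measurableSet_ball.diff measurableSet_ball) hpt
        _ ≤ T := lintegral_mono_set (Set.diff_subset.trans (ball_subset_ball hRε))
    refine le_trans ?_ hmono
    rw [hμS, ← mul_assoc, ← ENNReal.ofReal_mul (by positivity)]
    refine mul_le_mul' (ENNReal.ofReal_le_ofReal ?_) (le_refl V)
    have hRs : R ^ s * R ^ d = R ^ ((2 : ℝ) - d) := by
      rw [← Real.rpow_natCast R d, ← Real.rpow_add hRpos, hs]
      congr 1
      ring
    rw [← mul_assoc, hRs]
    have hexp : R ^ ((2 : ℝ) - d) = ε ^ ((2 : ℝ) - d) * ((2 : ℝ) ^ n) ^ ((d : ℝ) - 2) := by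
      rw [hR, Real.div_rpow hε.le (by positivity), div_eq_mul_inv,
        ← Real.rpow_neg (by positivity)]
      congr 1
      ring
    rw [hexp, hc₀]
    have h2n : (2 : ℝ) ^ n ≤ ((2 : ℝ) ^ n) ^ ((d : ℝ) - 2) := by
      nth_rewrite 1 [← Real.rpow_one ((2 : ℝ) ^ n)]
      exact Real.rpow_le_rpow_of_exponent_le (one_le_pow₀ one_le_two) (by linarith)
    calc ε ^ ((2:ℝ) - d) * κ * 2 ^ n ≤ ε ^ ((2:ℝ) - d) * κ * ((2:ℝ) ^ n) ^ ((d : ℝ) - 2) := by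
          gcongr
      _ = ε ^ ((2:ℝ) - d) * ((2:ℝ) ^ n) ^ ((d : ℝ) - 2) * κ := by ring
  have hvpos : 0 < V.toReal := ENNReal.toReal_pos hVpos.ne' hVfin
  obtain ⟨n, hn⟩ := pow_unbounded_of_one_lt (T.toReal / (c₀ * V.toReal)) (one_lt_two (α := ℝ))
  have := key n
  have hle : c₀ * 2 ^ n * V.toReal ≤ T.toReal := by
    have h1 := ENNReal.toReal_mono hTfin this
    rwa [ENNReal.toReal_mul, ENNReal.toReal_ofReal (by positivity)] at h1
  rw [div_lt_iff₀ (by positivity)] at hn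
  nlinarith

/-- For `d ≥ 3` and `c ≠ 0`, the function `û(x) = c‖x‖^(2-d)` (the Green's function of the
Laplacian up to a constant) has a gradient whose squared norm is not Lebesgue-integrable on any
open set `Ω` containing the origin; consequently `û ∉ H¹(Ω)`. -/
theorem green_function_high_dim_not_in_H1
    (d : ℕ) (hd : 3 ≤ d) (c : ℝ) (hc : c ≠ 0)
    (Ω : Set (EuclideanSpace ℝ (Fin d))) (hΩ : IsOpen Ω)
    (h0 : (0 : EuclideanSpace ℝ (Fin d)) ∈ Ω) :
    ¬ IntegrableOn
      (fun x : EuclideanSpace ℝ (Fin d) =>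
        ‖fderiv ℝ (fun y : EuclideanSpace ℝ (Fin d) => c * ‖y‖ ^ ((2 : ℝ) - d)) x‖ ^ 2)
      Ω volume := by
  set E := EuclideanSpace ℝ (Fin d)
  have hdim : Module.finrank ℝ E = d := finrank_euclideanSpace_fin
  have : Nontrivial E := by
    have : 0 < Module.finrank ℝ E := by omega
    exact Module.nontrivial_of_finrank_pos this
  have hd3 : (3 : ℝ) ≤ (d : ℝ) := by exact_mod_cast hd
  intro h
  obtain ⟨ε, hε, hball⟩ := Metric.isOpen_iff.mp hΩ 0 h0
  set p : ℝ := (2 : ℝ) - d with hp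
  set K : ℝ := (c * p) ^ 2 with hK
  have hKpos : 0 < K := by
    have : p ≠ 0 := by rw [hp]; intro h'; linarith [sub_eq_zero.mp h']
    positivity
  set f : E → ℝ := fun x => ‖fderiv ℝ (fun y : E => c * ‖y‖ ^ p) x‖ ^ 2 with hf
  have h2 : IntegrableOn f (Metric.ball 0 ε) volume := h.mono_set hball
  -- pointwise formula away from the origin
  have hptwise : ∀ x : E, x ≠ 0 → f x = K * ‖x‖ ^ ((2 : ℝ) - 2 * d) := by
    intro x hx
    have hn : (0 : ℝ) < ‖x‖ := norm_pos_iff.mpr hx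
    rw [hf]
    simp only
    rw [norm_fderiv_eq' x hx p c]
    rw [mul_pow, ← abs_mul, sq_abs, hK, mul_pow]
    congr 1
    rw [← Real.rpow_natCast (‖x‖ ^ (p - 1)) 2, ← Real.rpow_mul (norm_nonneg _)]
    congr 1
    rw [hp]
    push_cast
    ring
  have h0ae : ∀ᵐ x : E ∂volume, x ≠ 0 := by
    have h1 : volume ({(0 : E)} : Set E) = 0 := measure_singleton 0
    rw [ae_iff]
    simpa using h1
  have hae : f =ᵐ[volume.restrict (Metric.ball (0 : E) ε)]
      fun x => K * ‖x‖ ^ ((2 : ℝ) - 2 * d) := by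
    refine ae_restrict_of_ae ?_
    filter_upwards [h0ae] with x hx
    exact hptwise x hx
  have h3 : IntegrableOn (fun x : E => K * ‖x‖ ^ ((2 : ℝ) - 2 * d))
      (Metric.ball 0 ε) volume := h2.congr hae
  have h4 : IntegrableOn (fun x : E => ‖x‖ ^ ((2 : ℝ) - 2 * d)) (Metric.ball 0 ε) volume := by
    have := h3.const_mul K⁻¹
    refine this.congr (Filter.Eventually.of_forall fun x => ?_)
    field_simp
  exact not_int_aux' d hd hε h4
end

section
/- Let μ > 0 and 0 < ν < 1/2 be real numbers, let F ∈ ℝ³ with F ≠ 0, and define û : ℝ³ \ {0} → ℝ³ (on EuclideanSpace ℝ (Fin 3)) componentwise by û_i(x) = Σ_{j=1}^3 F_j/(16πμ(1-ν)‖x‖) · ( (3-4ν)δ_ij + x_i x_j/‖x‖² ), where δ_ij is the Kronecker delta. Then for every open set Ω ⊆ ℝ³ containing the origin, the function x ↦ ‖Dû(x)‖² (the squared norm of the total derivative fderiv ℝ û x) is not Lebesgue-integrable on Ω; consequently û does not belong to H¹(Ω; ℝ³). -/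
open MeasureTheory Real

/-- The Kelvin fundamental solution of three-dimensional linear elasticity with point force `F`
at the origin: `û_i(x) = Σ_j F_j/(16πμ(1-ν)‖x‖) · ((3-4ν)δ_ij + x_i x_j/‖x‖²)`. -/
noncomputable def kelvinSolution (μ ν : ℝ) (F : EuclideanSpace ℝ (Fin 3)) :
    EuclideanSpace ℝ (Fin 3) → EuclideanSpace ℝ (Fin 3) := fun x =>
  (WithLp.toLp 2 (fun i => ∑ j : Fin 3, F j / (16 * π * μ * (1 - ν) * ‖x‖) *
      ((3 - 4 * ν) * (if i = j then 1 else 0) + x i * x j / ‖x‖ ^ 2)) :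
    EuclideanSpace ℝ (Fin 3))

lemma kelvin_apply (μ ν : ℝ) (F : EuclideanSpace ℝ (Fin 3))
    (x : EuclideanSpace ℝ (Fin 3)) :
    kelvinSolution μ ν F x
      = (1 / (16 * π * μ * (1 - ν) * ‖x‖)) •
        ((3 - 4 * ν) • F + ((inner ℝ F x : ℝ) / ‖x‖ ^ 2) • x) := by
  ext i
  simp only [kelvinSolution, PiLp.toLp_apply, PiLp.smul_apply, PiLp.add_apply, smul_eq_mul,
    PiLp.inner_apply, RCLike.inner_apply, conj_trivial]
  have : ∀ j ∈ Finset.univ, F j / (16 * π * μ * (1 - ν) * ‖x‖) *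
      ((3 - 4 * ν) * (if i = j then 1 else 0) + x i * x j / ‖x‖ ^ 2)
      = (3 - 4 * ν) / (16 * π * μ * (1 - ν) * ‖x‖) * (if i = j then F j else 0)
        + x i * (F j * x j) / (16 * π * μ * (1 - ν) * ‖x‖) / ‖x‖ ^ 2 := by
    intro j _
    rcases eq_or_ne i j with h | h
    · subst h; simp; ring
    · simp only [if_neg h]; ring
  rw [Finset.sum_congr rfl this, Finset.sum_add_distrib, ← Finset.mul_sum,
    Finset.sum_ite_eq, if_pos (Finset.mem_univ i)]
  have hsum : (∑ j : Fin 3, x i * (F j * x j) / (16 * π * μ * (1 - ν) * ‖x‖) / ‖x‖ ^ 2)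
      = x i / (16 * π * μ * (1 - ν) * ‖x‖) / ‖x‖ ^ 2 * (∑ j : Fin 3, F j * x j) := by
    rw [Finset.mul_sum]
    exact Finset.sum_congr rfl fun j _ => by ring
  rw [hsum]
  simp only [mul_comm (x.ofLp _) (F.ofLp _)]
  ring

lemma kelvin_smul {μ ν : ℝ} (F : EuclideanSpace ℝ (Fin 3))
    (hC : 16 * π * μ * (1 - ν) ≠ 0)
    {x : EuclideanSpace ℝ (Fin 3)} (hx : x ≠ 0) {t : ℝ} (ht : 0 < t) :
    kelvinSolution μ ν F (t • x) = t⁻¹ • kelvinSolution μ ν F x := by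
  have hx' : ‖x‖ ≠ 0 := norm_ne_zero_iff.2 hx
  have ht' : t ≠ 0 := ht.ne'
  ext i
  simp only [kelvinSolution, PiLp.toLp_apply, PiLp.smul_apply, smul_eq_mul, norm_smul, Real.norm_eq_abs,
    abs_of_pos ht, Finset.mul_sum]
  refine Finset.sum_congr rfl fun j _ => ?_
  rcases eq_or_ne i j with h | h
  · subst h; simp only [if_pos rfl]; field_simp
  · simp only [if_neg h]; field_simp

lemma kelvin_differentiableAt {μ ν : ℝ} (F : EuclideanSpace ℝ (Fin 3))
    (hC : 16 * π * μ * (1 - ν) ≠ 0)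
    {x : EuclideanSpace ℝ (Fin 3)} (hx : x ≠ 0) :
    DifferentiableAt ℝ (kelvinSolution μ ν F) x := by
  have hn : DifferentiableAt ℝ (fun y : EuclideanSpace ℝ (Fin 3) => ‖y‖) x :=
    differentiableAt_id.norm ℝ hx
  have hx' : ‖x‖ ≠ 0 := norm_ne_zero_iff.2 hx
  have hD : 16 * π * μ * (1 - ν) * ‖x‖ ≠ 0 := mul_ne_zero hC hx'
  have hproj : ∀ k : Fin 3, DifferentiableAt ℝ
      (fun y : EuclideanSpace ℝ (Fin 3) => y k) x := fun k =>
    (EuclideanSpace.proj (𝕜 := ℝ) k).differentiableAt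
  have key : DifferentiableAt ℝ (fun y : EuclideanSpace ℝ (Fin 3) =>
      (fun i => ∑ j : Fin 3, F j / (16 * π * μ * (1 - ν) * ‖y‖) *
        ((3 - 4 * ν) * (if i = j then 1 else 0) + y i * y j / ‖y‖ ^ 2) : Fin 3 → ℝ)) x := by
    rw [differentiableAt_pi]
    intro i
    apply DifferentiableAt.fun_sum
    intro j _
    simp only [div_eq_mul_inv]
    have hden : DifferentiableAt ℝ
        (fun y : EuclideanSpace ℝ (Fin 3) => (16 * π * μ * (1 - ν) * ‖y‖)⁻¹) x :=
      (hn.const_mul _).inv hD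
    have hsq : DifferentiableAt ℝ
        (fun y : EuclideanSpace ℝ (Fin 3) => (‖y‖ ^ 2)⁻¹) x :=
      (hn.pow 2).inv (pow_ne_zero 2 hx')
    have h1 : DifferentiableAt ℝ
        (fun y : EuclideanSpace ℝ (Fin 3) => F j * (16 * π * μ * (1 - ν) * ‖y‖)⁻¹) x :=
      (differentiableAt_const _).mul hden
    have h2 : DifferentiableAt ℝ (fun y : EuclideanSpace ℝ (Fin 3) =>
        (3 - 4 * ν) * (if i = j then 1 else 0) + y i * y j * (‖y‖ ^ 2)⁻¹) x :=
      (differentiableAt_const _).add (((hproj i).mul (hproj j)).mul hsq)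
    exact h1.mul h2
  exact ((PiLp.continuousLinearEquiv 2 ℝ (fun _ : Fin 3 => ℝ)).symm.comp_differentiableAt_iff.mpr
    key : _)

lemma kelvin_norm_lower {μ ν : ℝ} (hμ : 0 < μ) (hν : ν < 1 / 2)
    (F : EuclideanSpace ℝ (Fin 3))
    {x : EuclideanSpace ℝ (Fin 3)} (hx : x ≠ 0) :
    (2 - 4 * ν) * ‖F‖ / (16 * π * μ * (1 - ν)) / ‖x‖ ≤ ‖kelvinSolution μ ν F x‖ := by
  have hπ := Real.pi_pos
  have h1ν : 0 < 1 - ν := by linarith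
  have hx0 : 0 < ‖x‖ := norm_pos_iff.2 hx
  have hD : 0 < 16 * π * μ * (1 - ν) := by positivity
  rw [kelvin_apply, norm_smul, Real.norm_eq_abs, abs_of_pos (by positivity)]
  set w := (3 - 4 * ν) • F + ((inner ℝ F x : ℝ) / ‖x‖ ^ 2) • x with hw
  have hcs : |(inner ℝ F x : ℝ)| ≤ ‖F‖ * ‖x‖ := abs_real_inner_le_norm F x
  have hlam : ‖((inner ℝ F x : ℝ) / ‖x‖ ^ 2) • x‖ ≤ ‖F‖ := by
    rw [norm_smul, Real.norm_eq_abs, abs_div, abs_of_nonneg (by positivity : (0:ℝ) ≤ ‖x‖ ^ 2)]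
    rw [div_mul_eq_mul_div, div_le_iff₀ (by positivity)]
    calc |(inner ℝ F x : ℝ)| * ‖x‖ ≤ ‖F‖ * ‖x‖ * ‖x‖ := by
          exact mul_le_mul_of_nonneg_right hcs hx0.le
      _ = ‖F‖ * ‖x‖ ^ 2 := by ring
  have hwlow : (2 - 4 * ν) * ‖F‖ ≤ ‖w‖ := by
    have htri : ‖(3 - 4 * ν) • F‖ - ‖-(((inner ℝ F x : ℝ) / ‖x‖ ^ 2) • x)‖ ≤ ‖w‖ := by
      have := norm_sub_norm_le ((3 - 4 * ν) • F) (-(((inner ℝ F x : ℝ) / ‖x‖ ^ 2) • x))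
      simpa [hw, sub_neg_eq_add] using this
    rw [norm_neg, norm_smul, Real.norm_eq_abs, abs_of_pos (by linarith : (0:ℝ) < 3 - 4 * ν)]
      at htri
    have : ‖((inner ℝ F x : ℝ) / ‖x‖ ^ 2) • x‖ ≤ ‖F‖ := hlam
    nlinarith [norm_nonneg F]
  calc (2 - 4 * ν) * ‖F‖ / (16 * π * μ * (1 - ν)) / ‖x‖
      = 1 / (16 * π * μ * (1 - ν) * ‖x‖) * ((2 - 4 * ν) * ‖F‖) := by
        field_simp
    _ ≤ 1 / (16 * π * μ * (1 - ν) * ‖x‖) * ‖w‖ :=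
        mul_le_mul_of_nonneg_left hwlow (by positivity)

lemma kelvin_fderiv_lower {μ ν : ℝ} (hμ : 0 < μ) (hν : ν < 1 / 2)
    (F : EuclideanSpace ℝ (Fin 3))
    {x : EuclideanSpace ℝ (Fin 3)} (hx : x ≠ 0) :
    (2 - 4 * ν) * ‖F‖ / (16 * π * μ * (1 - ν)) / ‖x‖ ^ 2
      ≤ ‖fderiv ℝ (kelvinSolution μ ν F) x‖ := by
  have hπ := Real.pi_pos
  have h1ν : 0 < 1 - ν := by linarith
  have hx0 : 0 < ‖x‖ := norm_pos_iff.2 hx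
  have hC : 16 * π * μ * (1 - ν) ≠ 0 := by positivity
  have hdiff := kelvin_differentiableAt F hC hx
  set L := fderiv ℝ (kelvinSolution μ ν F) x with hL
  have hEuler : L x = - kelvinSolution μ ν F x := by
    have hs : HasDerivAt (fun t : ℝ => t • x) x 1 := by
      simpa using (hasDerivAt_id (1:ℝ)).smul_const x
    have hfd : HasFDerivAt (kelvinSolution μ ν F) L ((1:ℝ) • x) := by
      rw [one_smul]; exact hdiff.hasFDerivAt
    have h1 : HasDerivAt (fun t : ℝ => kelvinSolution μ ν F (t • x)) (L x) 1 :=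
      hfd.comp_hasDerivAt (f := fun t : ℝ => t • x) 1 hs
    have h2 : HasDerivAt (fun t : ℝ => t⁻¹ • kelvinSolution μ ν F x)
        (-kelvinSolution μ ν F x) 1 := by
      have := (hasDerivAt_inv (one_ne_zero (α := ℝ))).smul_const (kelvinSolution μ ν F x)
      simpa using this
    have heq : (fun t : ℝ => kelvinSolution μ ν F (t • x))
        =ᶠ[nhds 1] fun t => t⁻¹ • kelvinSolution μ ν F x := by
      filter_upwards [eventually_gt_nhds (by norm_num : (0:ℝ) < 1)] with t ht
      exact kelvin_smul F hC hx ht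
    exact h1.unique (h2.congr_of_eventuallyEq heq)
  have hb : ‖kelvinSolution μ ν F x‖ ≤ ‖L‖ * ‖x‖ := by
    have := L.le_opNorm x
    rw [hEuler] at this
    simpa using this
  have hlow := kelvin_norm_lower hμ hν F hx
  rw [div_le_iff₀ (by positivity : (0:ℝ) < ‖x‖ ^ 2)]
  have h2 : (2 - 4 * ν) * ‖F‖ / (16 * π * μ * (1 - ν)) / ‖x‖ ≤ ‖L‖ * ‖x‖ := le_trans hlow hb
  rw [div_le_iff₀ hx0] at h2
  nlinarith

/-- The Kelvin fundamental solution `û` of 3D linear elasticity with point force `F ≠ 0` has a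
total derivative whose squared norm is not Lebesgue-integrable on any open set `Ω` containing
the origin; consequently `û ∉ H¹(Ω; ℝ³)`. -/
theorem kelvin_solution_not_in_H1
    (μ ν : ℝ) (hμ : 0 < μ) (hν0 : 0 < ν) (hν : ν < 1 / 2)
    (F : EuclideanSpace ℝ (Fin 3)) (hF : F ≠ 0)
    (Ω : Set (EuclideanSpace ℝ (Fin 3))) (hΩ : IsOpen Ω)
    (h0 : (0 : EuclideanSpace ℝ (Fin 3)) ∈ Ω) :
    ¬ IntegrableOn
      (fun x : EuclideanSpace ℝ (Fin 3) => ‖fderiv ℝ (kelvinSolution μ ν F) x‖ ^ 2)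
      Ω volume := by
  intro h
  have hπ := Real.pi_pos
  have h1ν : 0 < 1 - ν := by linarith
  set g := fun x : EuclideanSpace ℝ (Fin 3) => ‖fderiv ℝ (kelvinSolution μ ν F) x‖ ^ 2 with hg
  set κ := (2 - 4 * ν) * ‖F‖ / (16 * π * μ * (1 - ν)) with hκdef
  have hκ : 0 < κ := by
    have hF' : 0 < ‖F‖ := norm_pos_iff.2 hF
    exact div_pos (mul_pos (by linarith) hF') (by positivity)
  obtain ⟨ε, hε, hball⟩ := Metric.isOpen_iff.1 hΩ 0 h0
  have hsub : IntegrableOn g (Metric.ball 0 ε) := h.mono_set hball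
  have hfin : ∫⁻ x in Metric.ball (0 : EuclideanSpace ℝ (Fin 3)) ε,
      ENNReal.ofReal (g x) < ⊤ :=
    (hasFiniteIntegral_iff_ofReal (ae_of_all _ fun x => sq_nonneg _)).1 hsub.2
  have hmeasg : Measurable fun x => ENNReal.ofReal (g x) :=
    ((measurable_fderiv ℝ (kelvinSolution μ ν F)).norm.pow_const 2).ennreal_ofReal
  set v := volume (Metric.ball (0 : EuclideanSpace ℝ (Fin 3)) 1) with hvd
  have hv : v ≠ 0 := (Metric.measure_ball_pos _ _ one_pos).ne'
  have hvtop : v ≠ ⊤ := measure_ball_lt_top.ne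
  set A : ℕ → Set (EuclideanSpace ℝ (Fin 3)) :=
    fun k => Metric.ball 0 (ε / 2 ^ k) \ Metric.closedBall 0 (ε / 2 ^ (k + 1)) with hA
  have hmem : ∀ k x, x ∈ A k → ε / 2 ^ (k + 1) < ‖x‖ ∧ ‖x‖ < ε / 2 ^ k := by
    intro k x hx
    simp only [hA, Set.mem_diff, Metric.mem_ball, Metric.mem_closedBall,
      dist_zero_right, not_le] at hx
    exact ⟨hx.2, hx.1⟩
  have hApos : ∀ k x, x ∈ A k → x ≠ 0 := by
    intro k x hx h0x
    have h1 := (hmem k x hx).1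
    rw [h0x, norm_zero] at h1
    have : (0:ℝ) < ε / 2 ^ (k + 1) := by positivity
    linarith
  have hmeasA : ∀ k, MeasurableSet (A k) := fun k =>
    measurableSet_ball.diff measurableSet_closedBall
  have hdisj : Pairwise (Function.onFun Disjoint A) := by
    apply (pairwise_disjoint_on A).2
    intro m n hmn
    rw [Set.disjoint_left]
    intro x hxm hxn
    have h1 := (hmem m x hxm).1
    have h2 := (hmem n x hxn).2
    have h3 : ε / 2 ^ n ≤ ε / 2 ^ (m + 1) :=
      div_le_div_of_nonneg_left hε.le (by positivity)
        (pow_le_pow_right₀ one_le_two hmn)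
    linarith
  have hAsub : ⋃ k, A k ⊆ Metric.ball 0 ε := by
    refine Set.iUnion_subset fun k x hx => ?_
    rw [Metric.mem_ball, dist_zero_right]
    have h2 := (hmem k x hx).2
    have : ε / 2 ^ k ≤ ε := div_le_self hε.le (one_le_pow₀ one_le_two)
    linarith
  set c : ENNReal := ENNReal.ofReal (κ ^ 2 * (7 / 8) / ε) * v with hc
  have hcne : c ≠ 0 := by
    exact mul_ne_zero (ENNReal.ofReal_pos.2 (by positivity)).ne' hv
  have hAk : ∀ k, c ≤ ∫⁻ x in A k, ENNReal.ofReal (g x) := by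
    intro k
    set r := ε / 2 ^ k with hrdef
    have hr0 : 0 < r := by positivity
    have hrε : r ≤ ε := div_le_self hε.le (one_le_pow₀ one_le_two)
    have hhalf : ε / 2 ^ (k + 1) = r / 2 := by
      rw [hrdef, pow_succ]; ring
    have hpw : ∀ x ∈ A k, ENNReal.ofReal (κ ^ 2 / r ^ 4) ≤ ENNReal.ofReal (g x) := by
      intro x hx
      apply ENNReal.ofReal_le_ofReal
      have hxne := hApos k x hx
      have hlow := kelvin_fderiv_lower hμ hν F hxne
      have hxr : ‖x‖ < r := (hmem k x hx).2
      have hx0 : 0 < ‖x‖ := norm_pos_iff.2 hxne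
      have h1 : κ / r ^ 2 ≤ κ / ‖x‖ ^ 2 :=
        div_le_div_of_nonneg_left hκ.le (by positivity) (by nlinarith)
      have h2 : κ / r ^ 2 ≤ ‖fderiv ℝ (kelvinSolution μ ν F) x‖ := le_trans h1 hlow
      have hsq : (κ / r ^ 2) ^ 2 = κ ^ 2 / r ^ 4 := by
        rw [div_pow]; ring_nf
      calc κ ^ 2 / r ^ 4 = (κ / r ^ 2) ^ 2 := hsq.symm
        _ ≤ ‖fderiv ℝ (kelvinSolution μ ν F) x‖ ^ 2 :=
            pow_le_pow_left₀ (by positivity) h2 2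
    have hvol : ENNReal.ofReal (7 / 8 * r ^ 3) * v ≤ volume (A k) := by
      have hbsub : Metric.ball (0 : EuclideanSpace ℝ (Fin 3)) r
          ⊆ A k ∪ Metric.closedBall 0 (r / 2) := by
        intro x hx
        by_cases hxc : x ∈ Metric.closedBall (0 : EuclideanSpace ℝ (Fin 3)) (r / 2)
        · exact Or.inr hxc
        · refine Or.inl ⟨?_, ?_⟩
          · rw [hrdef] at hx; exact hx
          · rw [hhalf]; exact hxc
      have hb : volume (Metric.ball (0 : EuclideanSpace ℝ (Fin 3)) r)
          ≤ volume (A k) + volume (Metric.closedBall (0 : EuclideanSpace ℝ (Fin 3)) (r / 2)) :=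
        (measure_mono hbsub).trans (measure_union_le _ _)
      rw [Measure.addHaar_ball volume (0 : EuclideanSpace ℝ (Fin 3)) hr0.le,
        Measure.addHaar_closedBall volume (0 : EuclideanSpace ℝ (Fin 3))
          (by positivity : (0:ℝ) ≤ r / 2),
        finrank_euclideanSpace_fin] at hb
      have hsum : ENNReal.ofReal (7 / 8 * r ^ 3) * v + ENNReal.ofReal ((r / 2) ^ 3) * v
          = ENNReal.ofReal (r ^ 3) * v := by
        rw [← add_mul, ← ENNReal.ofReal_add (by positivity) (by positivity)]
        congr 1
        ring
      have hfin2 : ENNReal.ofReal ((r / 2) ^ 3) * v ≠ ⊤ :=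
        ENNReal.mul_ne_top ENNReal.ofReal_ne_top hvtop
      have hb2 : ENNReal.ofReal (7 / 8 * r ^ 3) * v + ENNReal.ofReal ((r / 2) ^ 3) * v
          ≤ volume (A k) + ENNReal.ofReal ((r / 2) ^ 3) * v := by
        rw [hsum]; exact hb
      exact (ENNReal.add_le_add_iff_right hfin2).1 hb2
    calc c ≤ ENNReal.ofReal (κ ^ 2 / r ^ 4) * (ENNReal.ofReal (7 / 8 * r ^ 3) * v) := by
          rw [hc, ← mul_assoc, ← ENNReal.ofReal_mul (by positivity)]
          refine mul_le_mul_left (ENNReal.ofReal_le_ofReal ?_) v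
          have heq : κ ^ 2 / r ^ 4 * (7 / 8 * r ^ 3) = κ ^ 2 * (7 / 8) / r := by
            field_simp
          rw [heq]
          exact div_le_div_of_nonneg_left (by positivity) hr0 hrε
      _ ≤ ENNReal.ofReal (κ ^ 2 / r ^ 4) * volume (A k) := mul_le_mul_right hvol _
      _ = ∫⁻ _ in A k, ENNReal.ofReal (κ ^ 2 / r ^ 4) := (setLIntegral_const _ _).symm
      _ ≤ ∫⁻ x in A k, ENNReal.ofReal (g x) := setLIntegral_mono hmeasg hpw
  have htop : (⊤ : ENNReal) ≤ ∫⁻ x in Metric.ball (0 : EuclideanSpace ℝ (Fin 3)) ε,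
      ENNReal.ofReal (g x) := by
    calc (⊤ : ENNReal) = ∑' _ : ℕ, c := (ENNReal.tsum_const_eq_top_of_ne_zero hcne).symm
      _ ≤ ∑' k, ∫⁻ x in A k, ENNReal.ofReal (g x) := ENNReal.tsum_le_tsum hAk
      _ = ∫⁻ x in ⋃ k, A k, ENNReal.ofReal (g x) := (lintegral_iUnion hmeasA hdisj _).symm
      _ ≤ _ := lintegral_mono_set hAsub
  exact absurd hfin (not_lt_of_ge htop)
end
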